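/- Let π* be a non-degenerate Borel probability measure on Δ(X) with barycenter q̄₀ satisfying ∫(û(q') − û(q̄₀)) dπ*(q') = (κ̄/χ)∫(H(q') − H(q̄₀)) dπ*(q') > 0, let α* = χ / ∫(H(q') − H(q̄₀)) dπ*(q'), and let (q_t), (F_t), T be the α*-dilution of π*. Then for every stopping time τ̂ of (F_t) with E[τ̂] < ∞ and every Borel probability measure π̂ on Δ(X) that is a mean-preserving contraction of the law of q_{τ̂} (i.e., ∫ f dπ̂ ≤ E[f(q_{τ̂})] for every continuous convex f : Δ(X) → ℝ), one has ∫ û dπ̂ − κ̄·E[τ̂] ≤ û(q̄₀). (Paper's Proposition 5: full attention is incentive compatible.) -/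

import Mathlib

open MeasureTheory ProbabilityTheory Filter Set
open scoped NNReal ENNReal

/-- `û(q) = max_{a ∈ A} ∑_{x ∈ X} q_x u_{a,x}`. -/
noncomputable def uhat {X A : Type*} [Fintype X] [Fintype A] [Nonempty A]
    (u : A → X → ℝ) (q : X → ℝ) : ℝ :=
  ⨆ a : A, ∑ x : X, q x * u a x

section aux
variable {X A : Type*} [Fintype X] [Fintype A] [Nonempty A]

lemma uhat_eq_sup' (u : A → X → ℝ) (q : X → ℝ) :
    uhat u q = Finset.univ.sup' Finset.univ_nonempty (fun a => ∑ x, q x * u a x) :=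
  (Finset.sup'_univ_eq_ciSup _).symm

lemma uhat_continuous (u : A → X → ℝ) : Continuous (uhat u) := by
  have h : Continuous (fun q : X → ℝ =>
      Finset.univ.sup' Finset.univ_nonempty (fun a => ∑ x, q x * u a x)) := by
    apply Continuous.finset_sup'_apply (f := fun (a : A) (q : X → ℝ) => ∑ x, q x * u a x)
    intro a _
    exact continuous_finset_sum _ fun x _ => (continuous_apply x).mul continuous_const
  have he : uhat u = fun q : X → ℝ =>
      Finset.univ.sup' Finset.univ_nonempty (fun a => ∑ x, q x * u a x) :=
    funext fun q => uhat_eq_sup' u q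
  rw [he]; exact h

lemma uhat_convexOn (u : A → X → ℝ) : ConvexOn ℝ Set.univ (uhat u) := by
  refine ⟨convex_univ, fun p _ r _ a b ha hb hab => ?_⟩
  rw [uhat]
  refine ciSup_le fun i => ?_
  have h1 : ∑ x, (a • p + b • r) x * u i x
      = a * ∑ x, p x * u i x + b * ∑ x, r x * u i x := by
    rw [Finset.mul_sum, Finset.mul_sum, ← Finset.sum_add_distrib]
    refine Finset.sum_congr rfl fun x _ => ?_
    simp only [Pi.add_apply, Pi.smul_apply, smul_eq_mul]
    ring
  rw [h1]
  have hb1 : (∑ x, p x * u i x) ≤ uhat u p := by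
    rw [uhat]
    exact le_ciSup (f := fun a => ∑ x, p x * u a x) (Set.Finite.bddAbove (Set.finite_range _)) i
  have hb2 : (∑ x, r x * u i x) ≤ uhat u r := by
    rw [uhat]
    exact le_ciSup (f := fun a => ∑ x, r x * u a x) (Set.Finite.bddAbove (Set.finite_range _)) i
  exact add_le_add (mul_le_mul_of_nonneg_left hb1 ha) (mul_le_mul_of_nonneg_left hb2 hb)

end aux

lemma min_exp_integral {Ω : Type*} {mΩ : MeasurableSpace Ω} (P : Measure Ω) [IsProbabilityMeasure P]
    (α : ℝ) (hα : 0 < α) (T : Ω → ℝ≥0) (hT : Measurable T)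
    (hTexp : ∀ t : ℝ≥0, P {ω | t < T ω} = ENNReal.ofReal (Real.exp (-(α * (t : ℝ)))))
    (c : ℝ≥0) :
    ∫ ω, (↑(min (T ω) c) : ℝ) ∂P = (1 - Real.exp (-(α * c))) / α := by
  have hfm : Measurable (fun ω => (↑(min (T ω) c) : ℝ)) :=
    measurable_coe_nnreal_real.comp (hT.min measurable_const)
  have hnn : (0:Ω → ℝ) ≤ᵐ[P] (fun ω => (↑(min (T ω) c) : ℝ)) :=
    Filter.Eventually.of_forall fun ω => NNReal.coe_nonneg _
  rw [integral_eq_lintegral_of_nonneg_ae hnn hfm.aestronglyMeasurable]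
  rw [MeasureTheory.lintegral_eq_lintegral_meas_lt P hnn hfm.aemeasurable]
  have hsets : ∀ t ∈ Ioi (0:ℝ), P {a | t < (↑(min (T a) c) : ℝ)}
      = (Set.Ioo (0:ℝ) (c:ℝ)).indicator (fun s => ENNReal.ofReal (Real.exp (-(α * s)))) t := by
    intro t ht
    rcases lt_or_ge t (c:ℝ) with htc | htc
    · rw [Set.indicator_of_mem (Set.mem_Ioo.mpr ⟨Set.mem_Ioi.mp ht, htc⟩)]
      have : {a | t < (↑(min (T a) c) : ℝ)} = {ω | t.toNNReal < T ω} := by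
        ext a
        simp only [Set.mem_setOf_eq, NNReal.coe_min, lt_min_iff]
        constructor
        · intro h
          exact (Real.toNNReal_lt_iff_lt_coe (le_of_lt ht)).mpr h.1
        · intro h
          exact ⟨(Real.toNNReal_lt_iff_lt_coe (le_of_lt ht)).mp h, htc⟩
      rw [this, hTexp]
      congr 2
      rw [Real.coe_toNNReal _ (le_of_lt ht)]
    · rw [Set.indicator_of_notMem (fun hmem => absurd hmem.2 (not_lt.mpr htc))]
      have hempty : {a : Ω | t < (↑(min (T a) c) : ℝ)} = (∅ : Set Ω) := by
        ext a
        simp only [Set.mem_setOf_eq, NNReal.coe_min, lt_min_iff, Set.mem_empty_iff_false,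
          iff_false, not_and]
        intro _
        exact not_lt.mpr htc
      rw [hempty, measure_empty]
  rw [setLIntegral_congr_fun measurableSet_Ioi
    hsets]
  rw [lintegral_indicator measurableSet_Ioo, Measure.restrict_restrict measurableSet_Ioo]
  rw [Set.inter_eq_left.mpr Set.Ioo_subset_Ioi_self]
  have hcont : Continuous (fun s : ℝ => Real.exp (-(α * s))) := by continuity
  have hint : IntegrableOn (fun s : ℝ => Real.exp (-(α * s))) (Set.Ioo (0:ℝ) (c:ℝ)) := by
    have h1 : IntegrableOn (fun s : ℝ => Real.exp (-(α * s))) (Set.Icc (0:ℝ) (c:ℝ)) :=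
      hcont.continuousOn.integrableOn_Icc
    exact h1.mono_set Set.Ioo_subset_Icc_self
  rw [← MeasureTheory.ofReal_integral_eq_lintegral_ofReal hint
    (Filter.Eventually.of_forall fun s => (Real.exp_pos _).le)]
  have hval : ∫ s in Set.Ioo (0:ℝ) (c:ℝ), Real.exp (-(α * s))
      = (1 - Real.exp (-(α * c))) / α := by
    rw [← integral_Ioc_eq_integral_Ioo, ← intervalIntegral.integral_of_le (NNReal.coe_nonneg c)]
    have hder : ∀ x ∈ Set.uIcc (0:ℝ) (c:ℝ), HasDerivAt (fun x => -Real.exp (-(α * x)) / α)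
        (Real.exp (-(α * x))) x := by
      intro x _
      have h1 : HasDerivAt (fun x : ℝ => -(α * x)) (-α) x := by
        have h0 : HasDerivAt (fun x : ℝ => α * x) α x := by simpa using (hasDerivAt_id x).const_mul α
        exact h0.neg
      have h2 := (Real.hasDerivAt_exp (-(α * x))).comp x h1
      have h3 := (h2.div_const α).neg
      simpa [Pi.neg_def, Function.comp, neg_div, mul_div_assoc, div_self hα.ne'] using h3
    rw [intervalIntegral.integral_eq_sub_of_hasDerivAt hder (hcont.intervalIntegrable _ _)]
    simp only [NNReal.coe_zero, mul_zero, neg_zero, Real.exp_zero]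
    ring
  rw [hval, ENNReal.toReal_ofReal]
  apply div_nonneg _ hα.le
  have : Real.exp (-(α * c)) ≤ 1 := Real.exp_le_one_iff.mpr (neg_nonpos.mpr
    (mul_nonneg hα.le (NNReal.coe_nonneg _)))
  linarith


/-- **paper's Proposition 5: full attention is incentive compatible.**
Let `π*` be a non-degenerate probability measure on the simplex with barycenter `q̄₀`
satisfying `∫(û − û(q̄₀)) dπ* = (κ̄/χ)∫(H − H(q̄₀)) dπ* > 0`, and let `(q_t), (F_t), T` be
its `α*`-dilution with `α* = χ/∫(H − H(q̄₀)) dπ*`. Then for every stopping time `τ̂` with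
`E[τ̂] < ∞` and every Borel probability measure `π̂` on the simplex that is a mean-preserving
contraction of the law of `q_τ̂`, one has `∫ û dπ̂ − κ̄·E[τ̂] ≤ û(q̄₀)`. -/
theorem stmt11
    {X A : Type*} [Fintype X] [Fintype A] [Nonempty A]
    (hX : 2 ≤ Fintype.card X)
    (u : A → X → ℝ)
    (H : (X → ℝ) → ℝ) (hH : ContDiff ℝ 2 H)
    (m : ℝ) (hm : 0 < m) (hHconv : StrongConvexOn (stdSimplex ℝ X) m H)
    (κ χ : ℝ) (hκ : 0 < κ) (hχ : 0 < χ)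
    (qbar : X → ℝ) (hqbar : qbar ∈ stdSimplex ℝ X)
    -- the measure π* and its properties
    (πstar : Measure (X → ℝ)) (hπprob : IsProbabilityMeasure πstar)
    (hπsupp : πstar (stdSimplex ℝ X) = 1)
    (hπbary : (∫ q', q' ∂πstar) = qbar)
    (hπnondeg : πstar {qbar} ≠ 1)
    (hπpos : 0 < ∫ q', (H q' - H qbar) ∂πstar)
    (hπeq : (∫ q', (uhat u q' - uhat u qbar) ∂πstar) =
      (κ / χ) * ∫ q', (H q' - H qbar) ∂πstar)
    (αstar : ℝ) (hα : αstar = χ / ∫ q', (H q' - H qbar) ∂πstar)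
    -- the α*-dilution of π*
    {Ω : Type*} {mΩ : MeasurableSpace Ω} (P : Measure Ω) [IsProbabilityMeasure P]
    (T : Ω → ℝ≥0) (hTmeas : Measurable T)
    (hTexp : ∀ t : ℝ≥0, P {ω | t < T ω} = ENNReal.ofReal (Real.exp (-(αstar * (t : ℝ)))))
    (Q : Ω → (X → ℝ)) (hQmeas : Measurable Q)
    (hQlaw : Measure.map Q P = πstar)
    (hindep : IndepFun T Q P)
    (q : ℝ≥0 → Ω → (X → ℝ))
    (hq : ∀ t ω, q t ω = if t < T ω then qbar else Q ω)
    (hqsm : ∀ t, StronglyMeasurable (q t))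
    (𝒢 : Filtration ℝ≥0 mΩ) (h𝒢 : 𝒢 = Filtration.natural q hqsm) :
    ∀ τhat : Ω → ℝ≥0, IsStoppingTime 𝒢 (fun ω => (τhat ω : WithTop ℝ≥0)) → Integrable (fun ω => (τhat ω : ℝ)) P →
    ∀ πhat : Measure (X → ℝ), IsProbabilityMeasure πhat → πhat (stdSimplex ℝ X) = 1 →
      -- π̂ is a mean-preserving contraction of the law of q_τ̂
      (∀ f : (X → ℝ) → ℝ, ContinuousOn f (stdSimplex ℝ X) →
        ConvexOn ℝ (stdSimplex ℝ X) f →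
        (∫ q', f q' ∂πhat) ≤ ∫ ω, f (q (τhat ω) ω) ∂P) →
      (∫ q', uhat u q' ∂πhat) - κ * (∫ ω, (τhat ω : ℝ) ∂P) ≤ uhat u qbar := by
  intro τhat hτ hτint πhat hπhatprob hπhatsupp hMPC
  classical
  have hαpos : 0 < αstar := by rw [hα]; exact div_pos hχ hπpos
  have hGval : (∫ q', (uhat u q' - uhat u qbar) ∂πstar) = κ / αstar := by
    rw [hπeq, hα, div_div_eq_mul_div, div_mul_eq_mul_div]
  have huc : Continuous (uhat u) := uhat_continuous u
  have hgc : Continuous (fun q' => uhat u q' - uhat u qbar) := huc.sub continuous_const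
  have hτmeas : Measurable τhat := measurable_of_Iic fun t => by
    convert 𝒢.le t _ (hτ t) using 1; ext ω; exact (WithTop.coe_le_coe (a := t) (b := τhat ω)).symm
  have hsimplmeas : MeasurableSet (stdSimplex ℝ X) := (isClosed_stdSimplex ℝ X).measurableSet
  have hQae : ∀ᵐ ω ∂P, Q ω ∈ stdSimplex ℝ X := by
    have h1 : P (Q ⁻¹' stdSimplex ℝ X) = 1 := by
      rw [← Measure.map_apply hQmeas hsimplmeas, hQlaw]; exact hπsupp
    have h0 : P ((Q ⁻¹' stdSimplex ℝ X)ᶜ) = 0 := by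
      rw [measure_compl (hQmeas hsimplmeas) (measure_ne_top _ _), h1, measure_univ, tsub_self]
    exact (ae_iff).mpr h0
  obtain ⟨C, hC⟩ := (isCompact_stdSimplex ℝ X).exists_bound_of_continuousOn hgc.continuousOn
  have hIndmeas : Measurable (fun ω => if T ω ≤ τhat ω then uhat u (Q ω) - uhat u qbar else 0) :=
    Measurable.ite (measurableSet_le hTmeas hτmeas) ((hgc.measurable).comp hQmeas)
      measurable_const
  have hIndint : Integrable (fun ω => if T ω ≤ τhat ω then uhat u (Q ω) - uhat u qbar else 0) P := by
    refine Integrable.mono' (integrable_const (max C 0)) hIndmeas.aestronglyMeasurable ?_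
    refine hQae.mono fun ω h => ?_
    split_ifs
    · exact le_trans (hC _ h) (le_max_left _ _)
    · simpa using le_max_right C 0
  -- Step B : decompose payoff
  have hqτ : ∀ ω, uhat u (q (τhat ω) ω)
      = uhat u qbar + (if T ω ≤ τhat ω then uhat u (Q ω) - uhat u qbar else 0) := by
    intro ω
    rw [hq]
    by_cases h : τhat ω < T ω
    · rw [if_pos h, if_neg (not_le.mpr h), add_zero]
    · rw [if_neg h, if_pos (not_lt.mp h)]; ring
  have hEq : (∫ ω, uhat u (q (τhat ω) ω) ∂P)
      = uhat u qbar + ∫ ω, (if T ω ≤ τhat ω then uhat u (Q ω) - uhat u qbar else 0) ∂P := by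
    rw [show (fun ω => uhat u (q (τhat ω) ω))
      = fun ω => uhat u qbar + (if T ω ≤ τhat ω then uhat u (Q ω) - uhat u qbar else 0)
      from funext hqτ]
    rw [integral_add (integrable_const _) hIndint, integral_const, probReal_univ]
    simp
  have hA : (∫ q', uhat u q' ∂πhat) ≤ ∫ ω, uhat u (q (τhat ω) ω) ∂P :=
    hMPC (uhat u) huc.continuousOn
      ((uhat_convexOn u).subset (Set.subset_univ _) (convex_stdSimplex ℝ X))
  have hgQint : Integrable (fun ω => uhat u (Q ω) - uhat u qbar) P := by
    refine Integrable.mono' (integrable_const (max C 0))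
      ((hgc.measurable.comp hQmeas).aestronglyMeasurable) ?_
    exact hQae.mono fun ω h => le_trans (hC _ h) (le_max_left _ _)
  have hgQval : (∫ ω, (uhat u (Q ω) - uhat u qbar) ∂P) = κ / αstar := by
    rw [← hGval, ← hQlaw, integral_map hQmeas.aemeasurable]
    exact hgc.aestronglyMeasurable
  -- the filtration triviality
  have hqconst : ∀ (t s : ℝ≥0), s ≤ t → ∀ ω, (t < T ω ∨ Q ω = qbar) → q s ω = qbar := by
    intro t s hst ω hω
    rw [hq]
    rcases hω with h | h
    · rw [if_pos (lt_of_le_of_lt hst h)]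
    · split_ifs <;> simp [h]
  have htriv : ∀ (t : ℝ≥0) (B : Set Ω), MeasurableSet[𝒢 t] B →
      ∀ ω, (t < T ω ∨ Q ω = qbar) → ∀ ω', (t < T ω' ∨ Q ω' = qbar) → (ω ∈ B ↔ ω' ∈ B) := by
    intro t
    let m' : MeasurableSpace Ω :=
      { MeasurableSet' := fun B =>
          ∀ ω, (t < T ω ∨ Q ω = qbar) → ∀ ω', (t < T ω' ∨ Q ω' = qbar) → (ω ∈ B ↔ ω' ∈ B)
        measurableSet_empty := by simp
        measurableSet_compl := fun B hB ω hω ω' hω' => by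
          simp only [Set.mem_compl_iff]
          exact (hB ω hω ω' hω').not
        measurableSet_iUnion := fun f hf ω hω ω' hω' => by
          simp only [Set.mem_iUnion]
          exact exists_congr fun i => hf i ω hω ω' hω' }
    have hle : 𝒢 t ≤ m' := by
      rw [h𝒢]
      have hnat : (Filtration.natural q hqsm) t
          = ⨆ j, ⨆ (_ : j ≤ t), MeasurableSpace.comap (q j) inferInstance := rfl
      rw [hnat]
      refine iSup₂_le fun j hj => ?_
      rintro B ⟨E, hE, rfl⟩
      intro ω hω ω' hω'
      simp only [Set.mem_preimage]
      rw [hqconst t j hj ω hω, hqconst t j hj ω' hω']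
    exact fun B hB => hle B hB
  have hdich : ∀ t : ℝ≥0, (∀ ω, (t < T ω ∨ Q ω = qbar) → τhat ω ≤ t)
      ∨ (∀ ω, (t < T ω ∨ Q ω = qbar) → t < τhat ω) := by
    intro t
    by_cases h : ∀ ω, (t < T ω ∨ Q ω = qbar) → τhat ω ≤ t
    · exact Or.inl h
    · push_neg at h
      obtain ⟨ω₀, hω₀, hτω₀⟩ := h
      refine Or.inr fun ω hω => ?_
      by_contra hle
      push_neg at hle
      exact absurd (WithTop.coe_le_coe.mp ((htriv t {ω | (τhat ω : WithTop ℝ≥0) ≤ (t : WithTop ℝ≥0)} (hτ t) ω hω ω₀ hω₀).mp (WithTop.coe_le_coe.mpr hle))) (not_le.mpr hτω₀)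
  have hmineq : ∀ c : ℝ≥0, ∫ ω, (↑(min (T ω) c) : ℝ) ∂P
      = (1 - Real.exp (-(αstar * c))) / αstar :=
    min_exp_integral P αstar hαpos T hTmeas hTexp
  have hminint : ∀ c : ℝ≥0, Integrable (fun ω => (↑(min (T ω) c) : ℝ)) P := by
    intro c
    refine Integrable.mono' (integrable_const (c:ℝ))
      ((measurable_coe_nnreal_real.comp (hTmeas.min measurable_const)).aestronglyMeasurable)
      (Filter.Eventually.of_forall fun ω => ?_)
    rw [Real.norm_of_nonneg (NNReal.coe_nonneg _)]
    exact_mod_cast min_le_right _ _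
  -- main claim
  have h3 : (∫ ω, (if T ω ≤ τhat ω then uhat u (Q ω) - uhat u qbar else 0) ∂P)
      ≤ κ * ∫ ω, (τhat ω : ℝ) ∂P := by
    by_cases hD : ({t : ℝ≥0 | ∀ ω, (t < T ω ∨ Q ω = qbar) → τhat ω ≤ t}).Nonempty
    · -- D nonempty case
      set tstar := sInf {t : ℝ≥0 | ∀ ω, (t < T ω ∨ Q ω = qbar) → τhat ω ≤ t} with htstar
      have hmemD : ∀ {t : ℝ≥0}, tstar < t → ∀ ω, (t < T ω ∨ Q ω = qbar) → τhat ω ≤ t := by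
        intro t ht
        obtain ⟨d, hd, hdt⟩ := exists_lt_of_csInf_lt hD ht
        intro ω hω
        have hωd : (d < T ω ∨ Q ω = qbar) := by
          rcases hω with h | h
          · exact Or.inl (lt_of_le_of_lt hdt.le h)
          · exact Or.inr h
        exact le_trans (hd ω hωd) hdt.le
      have hnotD : ∀ {t : ℝ≥0}, t < tstar → ∀ ω, (t < T ω ∨ Q ω = qbar) → t < τhat ω := by
        intro t ht
        rcases hdich t with h | h
        · have hmem : t ∈ {t : ℝ≥0 | ∀ ω, (t < T ω ∨ Q ω = qbar) → τhat ω ≤ t} := h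
          exact absurd (csInf_le (OrderBot.bddBelow _) hmem) (not_le.mpr ht)
        · exact h
      have hup : ∀ ω, tstar < T ω → τhat ω ≤ tstar := by
        intro ω hω
        by_contra hgt
        push_neg at hgt
        rcases le_total (T ω) (τhat ω) with hc | hc
        · obtain ⟨t, ht1, ht2⟩ := exists_between hω
          exact absurd (hmemD ht1 ω (Or.inl ht2)) (not_le.mpr (lt_of_lt_of_le ht2 hc))
        · obtain ⟨t, ht1, ht2⟩ := exists_between hgt
          exact absurd (hmemD ht1 ω (Or.inl (lt_of_lt_of_le ht2 hc))) (not_le.mpr ht2)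
      have hlow : ∀ ω, tstar < T ω → tstar ≤ τhat ω := by
        intro ω hω
        by_contra hlt
        push_neg at hlt
        exact lt_irrefl _ (hnotD hlt ω (Or.inl (hlt.trans hω)))
      have hTle : ∀ ω, T ω ≤ tstar → T ω ≤ τhat ω := by
        intro ω hω
        by_contra hlt
        push_neg at hlt
        exact lt_irrefl _ (hnotD (lt_of_lt_of_le hlt hω) ω (Or.inl hlt))
      have hset : ∀ ω, (T ω ≤ τhat ω) ↔ (T ω ≤ tstar) := by
        intro ω
        constructor
        · intro h
          by_contra hc
          push_neg at hc
          exact absurd (le_trans h (hup ω hc)) (not_le.mpr hc)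
        · exact hTle ω
      have hminτ : ∀ ω, min (T ω) tstar ≤ τhat ω := by
        intro ω
        rcases le_or_gt (T ω) tstar with h | h
        · exact le_trans (min_le_left _ _) (hTle ω h)
        · exact le_trans (min_le_right _ _) (hlow ω h)
      -- gain value
      have hIndeq : (fun ω => if T ω ≤ τhat ω then uhat u (Q ω) - uhat u qbar else 0)
          = fun ω => ((fun s : ℝ≥0 => if s ≤ tstar then (1:ℝ) else 0) (T ω))
              * ((fun q' => uhat u q' - uhat u qbar) (Q ω)) := by
        funext ω
        dsimp only
        by_cases h : T ω ≤ τhat ω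
        · rw [if_pos h, if_pos ((hset ω).mp h), one_mul]
        · rw [if_neg h, if_neg (fun hc => h ((hset ω).mpr hc)), zero_mul]
      have hφm : Measurable (fun s : ℝ≥0 => if s ≤ tstar then (1:ℝ) else 0) :=
        Measurable.ite (measurableSet_le measurable_id measurable_const)
          measurable_const measurable_const
      have hprod := (hindep.comp hφm hgc.measurable).integral_fun_mul_eq_mul_integral
        ((hφm.comp hTmeas).aestronglyMeasurable)
        ((hgc.measurable.comp hQmeas).aestronglyMeasurable)
      have hφval : (∫ ω, (if T ω ≤ tstar then (1:ℝ) else 0) ∂P)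
          = 1 - Real.exp (-(αstar * tstar)) := by
        have hie : (fun ω => (if T ω ≤ tstar then (1:ℝ) else 0))
            = Set.indicator {ω | T ω ≤ tstar} (fun _ => (1:ℝ)) := by
          funext ω
          rw [Set.indicator_apply]
          rfl
        rw [hie, integral_indicator_const (1:ℝ) (measurableSet_le hTmeas measurable_const),
          smul_eq_mul, mul_one]
        have hc : {ω | T ω ≤ tstar} = {ω | tstar < T ω}ᶜ := by
          ext ω
          simp [not_lt]
        rw [hc, measureReal_def, measure_compl (measurableSet_lt measurable_const hTmeas) (measure_ne_top _ _),
          measure_univ, hTexp]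
        have hle1 : ENNReal.ofReal (Real.exp (-(αstar * tstar))) ≤ 1 :=
          ENNReal.ofReal_le_one.mpr (Real.exp_le_one_iff.mpr (neg_nonpos.mpr
            (mul_nonneg hαpos.le (NNReal.coe_nonneg _))))
        rw [ENNReal.toReal_sub_of_le hle1 ENNReal.one_ne_top]
        rw [ENNReal.toReal_one, ENNReal.toReal_ofReal (Real.exp_pos _).le]
      have hIndval : (∫ ω, (if T ω ≤ τhat ω then uhat u (Q ω) - uhat u qbar else 0) ∂P)
          = (1 - Real.exp (-(αstar * tstar))) * (κ / αstar) := by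
        rw [hIndeq]
        have heq2 : (∫ ω, ((fun s : ℝ≥0 => if s ≤ tstar then (1:ℝ) else 0) (T ω))
            * ((fun q' => uhat u q' - uhat u qbar) (Q ω)) ∂P)
            = (∫ ω, (if T ω ≤ tstar then (1:ℝ) else 0) ∂P)
              * ∫ ω, (uhat u (Q ω) - uhat u qbar) ∂P := hprod
        rw [heq2, hφval, hgQval]
      have hcost : (1 - Real.exp (-(αstar * tstar))) / αstar ≤ ∫ ω, (τhat ω : ℝ) ∂P := by
        rw [← hmineq tstar]
        refine integral_mono (hminint tstar) hτint (fun ω => ?_)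
        exact_mod_cast hminτ ω
      rw [hIndval]
      have hp0 : 0 ≤ 1 - Real.exp (-(αstar * tstar)) := by
        have := Real.exp_le_one_iff.mpr (neg_nonpos.mpr
          (mul_nonneg hαpos.le (NNReal.coe_nonneg (tstar))))
        linarith
      calc (1 - Real.exp (-(αstar * tstar))) * (κ / αstar)
          = κ * ((1 - Real.exp (-(αstar * tstar))) / αstar) := by ring
        _ ≤ κ * ∫ ω, (τhat ω : ℝ) ∂P := mul_le_mul_of_nonneg_left hcost hκ.le
    · -- D empty case : τhat ≥ T everywhere
      have hTτ : ∀ ω, T ω ≤ τhat ω := by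
        intro ω
        by_contra h
        push_neg at h
        have h2 := (hdich (τhat ω)).resolve_left (fun hmem => hD ⟨_, hmem⟩)
        exact lt_irrefl _ (h2 ω (Or.inl h))
      have hIndval : (∫ ω, (if T ω ≤ τhat ω then uhat u (Q ω) - uhat u qbar else 0) ∂P)
          = κ / αstar := by
        rw [show (fun ω => if T ω ≤ τhat ω then uhat u (Q ω) - uhat u qbar else 0)
          = fun ω => uhat u (Q ω) - uhat u qbar from funext fun ω => if_pos (hTτ ω)]
        exact hgQval
      have hcost : 1 / αstar ≤ ∫ ω, (τhat ω : ℝ) ∂P := by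
        have hle : ∀ n : ℕ, (1 - Real.exp (-(αstar * n))) / αstar ≤ ∫ ω, (τhat ω : ℝ) ∂P := by
          intro n
          have h1 := hmineq (n : ℝ≥0)
          rw [show (((n : ℝ≥0)) : ℝ) = (n : ℝ) by simp] at h1
          rw [← h1]
          refine integral_mono (hminint _) hτint (fun ω => ?_)
          exact_mod_cast le_trans (min_le_left (T ω) _) (hTτ ω)
        have htend : Tendsto (fun n : ℕ => (1 - Real.exp (-(αstar * n))) / αstar) atTop
            (nhds ((1 - 0) / αstar)) := by
          apply Tendsto.div_const
          refine Tendsto.sub tendsto_const_nhds ?_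
          exact Real.tendsto_exp_atBot.comp (Filter.tendsto_neg_atTop_atBot.comp
            (Filter.Tendsto.const_mul_atTop hαpos tendsto_natCast_atTop_atTop))
        have := le_of_tendsto htend (Filter.Eventually.of_forall hle)
        simpa using this
      rw [hIndval]
      calc κ / αstar = κ * (1 / αstar) := by ring
        _ ≤ κ * ∫ ω, (τhat ω : ℝ) ∂P := mul_le_mul_of_nonneg_left hcost hκ.le
  linarith [hA, hEq, h3]
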